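/- Let F(t) = Σ_{i≥0} a_i t^i be a formal power series over ℂ, and suppose there exists a positive integer p and a polynomial P_p such that Σ_{i=0}^{pn-1} a_i = P_p(n) for all positive integers n. If q is another positive integer with a polynomial P_q satisfying Σ_{i=0}^{qn-1} a_i = P_q(n) for all n ≥ 1, then P_p(0) = P_q(0); i.e., the constant term of such a polynomial is independent of the period p. -/

import Mathlib

open BigOperators

theorem stmt5 (a : ℕ → ℂ) (p q : ℕ) (hp : 0 < p) (hq : 0 < q)
    (Pp Pq : Polynomial ℂ)
    (hPp : ∀ n : ℕ, 1 ≤ n → ∑ i ∈ Finset.range (p * n), a i = Pp.eval (n : ℂ))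
    (hPq : ∀ n : ℕ, 1 ≤ n → ∑ i ∈ Finset.range (q * n), a i = Pq.eval (n : ℂ)) :
    Pp.eval 0 = Pq.eval 0 := by
  set P1 := Pp.comp (Polynomial.C (q : ℂ) * Polynomial.X) with hP1
  set P2 := Pq.comp (Polynomial.C (p : ℂ) * Polynomial.X) with hP2
  have key : P1 = P2 := by
    apply Polynomial.eq_of_infinite_eval_eq
    apply Set.Infinite.mono (s := (fun n : ℕ => (n : ℂ)) '' {n | 1 ≤ n})
    · rintro x ⟨n, hn, rfl⟩
      have hn' : 1 ≤ n := hn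
      simp only [Set.mem_setOf_eq, hP1, hP2, Polynomial.eval_comp, Polynomial.eval_mul,
        Polynomial.eval_C, Polynomial.eval_X]
      have h1 := hPp (q * n) (Nat.one_le_iff_ne_zero.mpr (Nat.mul_ne_zero (by omega) (by omega)))
      have h2 := hPq (p * n) (Nat.one_le_iff_ne_zero.mpr (Nat.mul_ne_zero (by omega) (by omega)))
      push_cast at h1 h2
      rw [← h1, ← h2, ← mul_assoc, ← mul_assoc, Nat.mul_comm p q]
    · exact Set.Infinite.image (fun x _ y _ h => Nat.cast_injective h) (Set.Ici_infinite 1)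
  have e1 : P1.eval 0 = Pp.eval 0 := by simp [hP1]
  have e2 : P2.eval 0 = Pq.eval 0 := by simp [hP2]
  rw [← e1, ← e2, key]
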